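/- Let f be a symmetric Boolean function on n variables with simplified value vector v_f : {0,…,n} → F₂ (v_f(i) is the value of f on inputs of Hamming weight i) and SANF coefficients λ_f : {0,…,n} → F₂ defined by f = Σ_i λ_f(i) σ_i^n where σ_i^n is the elementary-like homogeneous symmetric function of degree i. Then λ_f(i) = Σ_{j ⪯ i} v_f(j) and v_f(i) = Σ_{j ⪯ i} λ_f(j), where ⪯ is bitwise domination and sums are over F₂. -/

import Mathlib

open scoped Classical

/-- Bitwise domination: every bit of `a` is ≤ the corresponding bit of `b`. -/
def Pre (a b : ℕ) : Prop := ∀ t, a.testBit t = true → b.testBit t = true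
/-- Hamming weight of a Boolean vector. -/
def wtv {n : ℕ} (x : Fin n → ZMod 2) : ℕ := (Finset.univ.filter (fun i => x i = 1)).card

/-- A Boolean function is symmetric if invariant under permutations of inputs. -/
def SymmF {n : ℕ} (f : (Fin n → ZMod 2) → ZMod 2) : Prop :=
  ∀ σ : Equiv.Perm (Fin n), ∀ x, f (x ∘ σ) = f x

/-- The algebraic degree of a Boolean function: the least `d` such that `f` is
represented by a polynomial of total degree at most `d`. -/
noncomputable def funcDeg {n : ℕ} (f : (Fin n → ZMod 2) → ZMod 2) : ℕ :=
  sInf {d | ∃ P : MvPolynomial (Fin n) (ZMod 2), P.totalDegree ≤ d ∧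
    ∀ x, MvPolynomial.eval x P = f x}

/-- Algebraic immunity: the minimal degree of a nonzero annihilator of `f` or `f+1`. -/
noncomputable def AI {n : ℕ} (f : (Fin n → ZMod 2) → ZMod 2) : ℕ :=
  sInf {d | ∃ g : (Fin n → ZMod 2) → ZMod 2, g ≠ 0 ∧ funcDeg g = d ∧
    (f * g = 0 ∨ (f + 1) * g = 0)}

/-- The elementary symmetric Boolean function of degree `i` on `n` variables. -/
def sigmaF (n i : ℕ) : (Fin n → ZMod 2) → ZMod 2 :=
  fun x => ∑ s ∈ Finset.univ.powersetCard i, ∏ j ∈ s, x j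

lemma pre_div2 {i w : ℕ} :
    Pre i w ↔ ((i.testBit 0 = true → w.testBit 0 = true) ∧ Pre (i/2) (w/2)) := by
  constructor
  · intro h
    refine ⟨h 0, fun t ht => ?_⟩
    rw [Nat.testBit_div_two] at ht ⊢
    exact h _ ht
  · rintro ⟨h0, h⟩ t ht
    cases t with
    | zero => exact h0 ht
    | succ t =>
      rw [← Nat.testBit_div_two] at ht ⊢
      exact h t ht

lemma pre_zero {i : ℕ} : Pre i 0 ↔ i = 0 := by
  constructor
  · intro h
    refine Nat.eq_of_testBit_eq fun t => ?_
    rw [Nat.zero_testBit]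
    by_contra hc
    simpa using h t (by simpa using hc)
  · rintro rfl t ht; exact ht

lemma lucas2 : ∀ w i : ℕ, ((w.choose i : ZMod 2)) = if Pre i w then 1 else 0 := by
  intro w
  induction w using Nat.strong_induction_on with
  | _ w IH =>
    intro i
    rcases Nat.eq_zero_or_pos w with rfl | hw
    · rcases Nat.eq_zero_or_pos i with rfl | hi
      · simp [pre_zero]
      · rw [Nat.choose_eq_zero_of_lt hi]
        simp [pre_zero, hi.ne']
    · haveI : Fact (Nat.Prime 2) := ⟨Nat.prime_two⟩
      have hmod : ((w.choose i : ZMod 2)) =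
          ((((w % 2).choose (i % 2)) * ((w / 2).choose (i / 2)) : ℕ) : ZMod 2) := by
        have h1 := @Choose.choose_modEq_choose_mod_mul_choose_div w i 2 _
        have h2 := (ZMod.intCast_eq_intCast_iff _ _ _).mpr h1
        exact_mod_cast h2
      have IH2 := IH (w / 2) (Nat.div_lt_self hw one_lt_two) (i / 2)
      have key : Pre i w ↔ ((i % 2 = 1 → w % 2 = 1) ∧ Pre (i/2) (w/2)) := by
        rw [pre_div2]; simp [Nat.testBit_zero]
      rw [hmod]
      push_cast
      rw [IH2]
      have hw2 : w % 2 = 0 ∨ w % 2 = 1 := by omega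
      have hi2 : i % 2 = 0 ∨ i % 2 = 1 := by omega
      rcases hi2 with hi2 | hi2 <;> rcases hw2 with hw2 | hw2 <;>
        simp [hi2, hw2, key]

lemma pre_le {j i : ℕ} (h : Pre j i) : j ≤ i := by
  have hand : j &&& i = j := by
    refine Nat.eq_of_testBit_eq fun t => ?_
    rw [Nat.testBit_and]
    cases hj : j.testBit t
    · simp
    · simp [h t hj]
  calc j = j &&& i := hand.symm
    _ ≤ i := Nat.and_le_right

lemma pre_antisymm {j i : ℕ} (h1 : Pre j i) (h2 : Pre i j) : j = i :=
  le_antisymm (pre_le h1) (pre_le h2)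

lemma pre_trans {a b c : ℕ} (h1 : Pre a b) (h2 : Pre b c) : Pre a c :=
  fun t ht => h2 t (h1 t ht)

lemma pre_refl (a : ℕ) : Pre a a := fun _ h => h

lemma sigma_eq {n : ℕ} (i : ℕ) (x : Fin n → ZMod 2) :
    sigmaF n i x = ((wtv x).choose i : ZMod 2) := by
  classical
  show (∑ s ∈ Finset.univ.powersetCard i, ∏ j ∈ s, x j) = ((wtv x).choose i : ZMod 2)
  set S := Finset.univ.filter (fun j => x j = 1) with hS
  have hzo : ∀ a : ZMod 2, a ≠ 1 → a = 0 := by decide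
  have hprod : ∀ s : Finset (Fin n), (∏ j ∈ s, x j) = if s ⊆ S then 1 else 0 := by
    intro s
    split_ifs with h
    · refine Finset.prod_eq_one fun j hj => ?_
      have := h hj
      rw [hS, Finset.mem_filter] at this
      exact this.2
    · obtain ⟨j, hj, hjS⟩ := Finset.not_subset.mp h
      refine Finset.prod_eq_zero hj (hzo _ ?_)
      intro hx1
      exact hjS (by rw [hS, Finset.mem_filter]; exact ⟨Finset.mem_univ j, hx1⟩)
  simp_rw [hprod]
  rw [Finset.sum_boole]
  have hfil : (Finset.univ.powersetCard i).filter (fun s => s ⊆ S) = S.powersetCard i := by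
    ext s
    simp only [Finset.mem_filter, Finset.mem_powersetCard]
    constructor
    · rintro ⟨⟨-, hc⟩, hsub⟩; exact ⟨hsub, hc⟩
    · rintro ⟨hsub, hc⟩; exact ⟨⟨Finset.subset_univ s, hc⟩, hsub⟩
  rw [hfil, Finset.card_powersetCard]
  rfl

lemma exists_wt {n : ℕ} (w : ℕ) (hw : w ≤ n) : ∃ x : Fin n → ZMod 2, wtv x = w := by
  classical
  refine ⟨fun j => if (j : ℕ) < w then 1 else 0, ?_⟩
  have hfil : (Finset.univ.filter fun j : Fin n =>
      (if (j : ℕ) < w then (1 : ZMod 2) else 0) = 1) =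
      Finset.univ.filter (fun j : Fin n => (j : ℕ) < w) := by
    ext j
    by_cases h : (j : ℕ) < w <;> simp [h]
  rw [wtv, hfil]
  rw [Finset.card_bij (fun (j : Fin n) _ => (j : ℕ)) ?_ ?_ ?_]
  · exact (Finset.card_range w)
  · intro a ha
    simp only [Finset.mem_filter] at ha
    exact Finset.mem_range.mpr ha.2
  · intro a _ b _ hab
    exact Fin.val_injective hab
  · intro m hm
    rw [Finset.mem_range] at hm
    exact ⟨⟨m, lt_of_lt_of_le hm hw⟩, by simp [hm], rfl⟩

theorem stmt3 {n : ℕ} (f : (Fin n → ZMod 2) → ZMod 2) (hf : SymmF f)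
    (v lam : ℕ → ZMod 2)
    (hv : ∀ x, f x = v (wtv x))
    (hlam : ∀ x, f x = ∑ i ∈ Finset.range (n+1), lam i * sigmaF n i x) :
    ∀ i ≤ n,
      lam i = ∑ j ∈ (Finset.range (n+1)).filter (fun j => Pre j i), v j ∧
      v i = ∑ j ∈ (Finset.range (n+1)).filter (fun j => Pre j i), lam j := by
  classical
  have A : ∀ w ≤ n, v w = ∑ j ∈ (Finset.range (n+1)).filter (fun j => Pre j w), lam j := by
    intro w hw
    obtain ⟨x, hx⟩ := exists_wt w hw
    have h1 : v w = ∑ i ∈ Finset.range (n+1), lam i * sigmaF n i x := by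
      rw [← hlam x, hv x, hx]
    rw [h1, Finset.sum_filter]
    refine Finset.sum_congr rfl fun i _ => ?_
    rw [sigma_eq, hx, lucas2]
    split_ifs with h <;> simp
  intro i hi
  refine ⟨?_, A i hi⟩
  set F : ℕ → Finset ℕ := fun m => (Finset.range (n+1)).filter (fun j => Pre j m) with hF
  have hmemF : ∀ {j m : ℕ}, j ∈ F m ↔ j < n + 1 ∧ Pre j m := by
    intro j m; rw [hF]; simp [Finset.mem_filter]
  have step1 : ∑ j ∈ F i, v j = ∑ j ∈ F i, ∑ k ∈ F j, lam k := by
    refine Finset.sum_congr rfl fun j hj => ?_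
    exact A j (by have := (hmemF.mp hj).1; omega)
  have step2 : ∑ j ∈ F i, ∑ k ∈ F j, lam k
      = ∑ k ∈ F i, ∑ j ∈ (F i).filter (fun j => Pre k j), lam k := by
    refine Finset.sum_comm' ?_
    intro j k
    simp only [hmemF, Finset.mem_filter]
    constructor
    · rintro ⟨⟨hj1, hj2⟩, hk1, hk2⟩
      exact ⟨⟨⟨hj1, hj2⟩, hk2⟩, hk1, pre_trans hk2 hj2⟩
    · rintro ⟨⟨⟨hj1, hj2⟩, hk2⟩, hk1, _⟩
      exact ⟨⟨hj1, hj2⟩, hk1, hk2⟩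
  have step3 : ∀ k ∈ F i, k ≠ i → ∑ j ∈ (F i).filter (fun j => Pre k j), lam k = 0 := by
    intro k hk hne
    obtain ⟨hk1, hk2⟩ := hmemF.mp hk
    have hbit : ∃ t, i.testBit t = true ∧ k.testBit t = false := by
      by_contra hc
      push_neg at hc
      apply hne
      refine Nat.eq_of_testBit_eq fun t => ?_
      cases hkt : k.testBit t with
      | true => exact (hk2 t hkt).symm
      | false =>
        cases hit : i.testBit t with
        | true => exact absurd hkt (hc t hit)
        | false => rfl
    obtain ⟨t, hit, hkt⟩ := hbit
    have hxt : ∀ j : ℕ, (j ^^^ 2 ^ t).testBit t = !(j.testBit t) := by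
      intro j
      rw [Nat.testBit_xor, Nat.testBit_two_pow_self, Bool.xor_true]
    have hxs : ∀ (j : ℕ) (s : ℕ), s ≠ t → (j ^^^ 2 ^ t).testBit s = j.testBit s := by
      intro j s hs
      rw [Nat.testBit_xor, Nat.testBit_two_pow_of_ne (fun h => hs h.symm), Bool.xor_false]
    have hgmem : ∀ j ∈ (F i).filter (fun j => Pre k j),
        (j ^^^ 2 ^ t) ∈ (F i).filter (fun j => Pre k j) := by
      intro j hj
      rw [Finset.mem_filter, hmemF] at hj
      obtain ⟨⟨hj1, hj2⟩, hj3⟩ := hj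
      have hpre1 : Pre (j ^^^ 2 ^ t) i := by
        intro s hs
        by_cases hst : s = t
        · subst hst; exact hit
        · exact hj2 s (by rw [← hxs j s hst]; exact hs)
      have hpre2 : Pre k (j ^^^ 2 ^ t) := by
        intro s hs
        have hst : s ≠ t := fun h => by rw [h, hkt] at hs; exact Bool.false_ne_true hs
        rw [hxs j s hst]
        exact hj3 s hs
      rw [Finset.mem_filter, hmemF]
      exact ⟨⟨Nat.lt_succ_of_le (le_trans (pre_le hpre1) hi), hpre1⟩, hpre2⟩
    refine Finset.sum_involution (fun j _ => j ^^^ 2 ^ t) ?_ ?_ hgmem ?_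
    · intro a _
      exact CharTwo.add_self_eq_zero _
    · intro a ha _
      intro hcon
      have := congrArg (fun m => m.testBit t) hcon
      simp only [hxt] at this
      exact Bool.not_ne_self _ this
    · intro a _
      exact Nat.xor_xor_cancel_right _ _
  have step4 : (F i).filter (fun j => Pre i j) = {i} := by
    ext j
    rw [Finset.mem_filter, hmemF, Finset.mem_singleton]
    constructor
    · rintro ⟨⟨-, hj2⟩, hj3⟩
      exact pre_antisymm hj2 hj3
    · rintro rfl
      exact ⟨⟨Nat.lt_succ_of_le hi, pre_refl _⟩, pre_refl _⟩
  have hiF : i ∈ F i := hmemF.mpr ⟨Nat.lt_succ_of_le hi, pre_refl i⟩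
  rw [show ((Finset.range (n+1)).filter (fun j => Pre j i)) = F i from rfl]
  rw [step1, step2, Finset.sum_eq_single i step3 (fun h => absurd hiF h)]
  rw [step4, Finset.sum_singleton]
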